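/- arXiv:math/0508612 — 3 statements merged into one kernel-verified Lean document; each statement's English description precedes it below -/
import Mathlib

section
/- If D₁, D₂ : [0,∞) → ℝ are twice differentiable and satisfy Dᵢ″(x) = λ² ρ(x) Dᵢ(x) for all x ≥ 0, Dᵢ′(0) = −1, and lim_{x→∞} Dᵢ(x) = 0 (for i = 1, 2), then D₁ = D₂. -/
open MeasureTheory Filter Set

/-- If `U ≥ 0` satisfies `U'' = q U` with `q > 0` on `[0,∞)`, is positive with positive
derivative at some `a ≥ 0`, and tends to `0` at `∞`, we get a contradiction. -/
lemma krein_key1 (q U U' : ℝ → ℝ) (hq : ∀ x ∈ Set.Ici (0:ℝ), 0 < q x)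
    (hU : ∀ x ∈ Set.Ici (0:ℝ), HasDerivWithinAt U (U' x) (Set.Ici 0) x)
    (hU' : ∀ x ∈ Set.Ici (0:ℝ), HasDerivWithinAt U' (q x * U x) (Set.Ici 0) x)
    (hlim : Filter.Tendsto U Filter.atTop (nhds 0))
    (a : ℝ) (ha : 0 ≤ a) (hUa : 0 < U a) (hU'a : 0 < U' a) : False := by
  have hUcont : ContinuousOn U (Set.Ici 0) := fun x hx => (hU x hx).continuousWithinAt
  have hU'cont : ContinuousOn U' (Set.Ici 0) := fun x hx => (hU' x hx).continuousWithinAt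
  set m := U' a / 2 with hm
  have hmpos : 0 < m := by positivity
  have hmlt : m < U' a := by simp only [hm]; linarith
  set S := Set.Ici a ∩ U' ⁻¹' Set.Iic m with hS
  by_cases hne : S.Nonempty
  · have hclosed : IsClosed S :=
      (hU'cont.mono (Set.Ici_subset_Ici.2 ha)).preimage_isClosed_of_isClosed
        isClosed_Ici isClosed_Iic
    have hbdd : BddBelow S := ⟨a, fun x hx => hx.1⟩
    set c := sInf S with hc
    have hcS : c ∈ S := hclosed.csInf_mem hne hbdd
    have hac : a ≤ c := hcS.1
    have hU'c : U' c ≤ m := hcS.2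
    have hac' : a < c := lt_of_le_of_ne hac (fun heq => by rw [← heq] at hU'c; linarith)
    have hgt : ∀ x ∈ Set.Ico a c, m < U' x := by
      intro x hx
      by_contra h
      exact absurd (csInf_le hbdd ⟨hx.1, not_lt.1 h⟩) (not_le.2 hx.2)
    have hUc0 : Set.Icc a c ⊆ Set.Ici 0 := fun x hx => le_trans ha hx.1
    have hmono : StrictMonoOn U (Set.Icc a c) := by
      apply strictMonoOn_of_hasDerivWithinAt_pos (convex_Icc a c) (hUcont.mono hUc0)
      · intro x hx
        rw [interior_Icc] at hx
        have hx0 : 0 < x := lt_of_le_of_lt ha hx.1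
        exact ((hU x (le_of_lt hx0)).hasDerivAt (Ici_mem_nhds hx0)).hasDerivWithinAt
      · intro x hx
        rw [interior_Icc] at hx
        exact lt_trans hmpos (hgt x ⟨le_of_lt hx.1, hx.2⟩)
    have hUpos : ∀ x ∈ Set.Icc a c, 0 < U x := by
      intro x hx
      exact lt_of_lt_of_le hUa
        (hmono.monotoneOn (Set.left_mem_Icc.2 (le_of_lt hac')) hx hx.1)
    have hmono' : StrictMonoOn U' (Set.Icc a c) := by
      apply strictMonoOn_of_hasDerivWithinAt_pos (convex_Icc a c) (hU'cont.mono hUc0)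
      · intro x hx
        rw [interior_Icc] at hx
        have hx0 : 0 < x := lt_of_le_of_lt ha hx.1
        exact ((hU' x (le_of_lt hx0)).hasDerivAt (Ici_mem_nhds hx0)).hasDerivWithinAt
      · intro x hx
        rw [interior_Icc] at hx
        exact mul_pos (hq x (le_of_lt (lt_of_le_of_lt ha hx.1)))
          (hUpos x ⟨le_of_lt hx.1, le_of_lt hx.2⟩)
    have := hmono' (Set.left_mem_Icc.2 (le_of_lt hac'))
      (Set.right_mem_Icc.2 (le_of_lt hac')) hac'
    linarith
  · have hgt : ∀ x, a ≤ x → m < U' x := by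
      intro x hx
      by_contra h
      exact hne ⟨x, hx, not_lt.1 h⟩
    -- the function U x - x * m is strictly increasing on [a, ∞)
    have hmono : StrictMonoOn (fun x => U x - x * m) (Set.Ici a) := by
      apply strictMonoOn_of_hasDerivWithinAt_pos (f' := fun x => U' x - m) (convex_Ici a)
      · exact ((hUcont.mono (Set.Ici_subset_Ici.2 ha)).sub
          (continuous_id.mul continuous_const).continuousOn)
      · intro x hx
        rw [interior_Ici] at hx
        have hx0 : 0 < x := lt_of_le_of_lt ha hx
        exact (((hU x (le_of_lt hx0)).hasDerivAt (Ici_mem_nhds hx0)).sub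
          (hasDerivAt_mul_const m)).hasDerivWithinAt
      · intro x hx
        rw [interior_Ici] at hx
        have := hgt x (le_of_lt hx)
        linarith
    obtain ⟨x, hx1, hx2⟩ :=
      ((hlim.eventually (gt_mem_nhds hUa)).and (eventually_ge_atTop (a + 1))).exists
    have hax : a < x := by linarith
    have := hmono (Set.mem_Ici.2 le_rfl) (le_of_lt hax) hax
    simp only at this
    nlinarith

/-- Variant of `krein_key1` with `0 ≤ U' a`. -/
lemma krein_key2 (q U U' : ℝ → ℝ) (hq : ∀ x ∈ Set.Ici (0:ℝ), 0 < q x)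
    (hU : ∀ x ∈ Set.Ici (0:ℝ), HasDerivWithinAt U (U' x) (Set.Ici 0) x)
    (hU' : ∀ x ∈ Set.Ici (0:ℝ), HasDerivWithinAt U' (q x * U x) (Set.Ici 0) x)
    (hlim : Filter.Tendsto U Filter.atTop (nhds 0))
    (a : ℝ) (ha : 0 ≤ a) (hUa : 0 < U a) (hU'a : 0 ≤ U' a) : False := by
  rcases hU'a.lt_or_eq with h | h
  · exact krein_key1 q U U' hq hU hU' hlim a ha hUa h
  · have hUcont : ContinuousOn U (Set.Ici 0) := fun x hx => (hU x hx).continuousWithinAt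
    have hd := hU' a ha
    rw [hasDerivWithinAt_iff_tendsto_slope] at hd
    have hsub : Set.Ioi a ⊆ Set.Ici 0 \ {a} := fun x hx =>
      ⟨le_trans ha (le_of_lt hx), ne_of_gt hx⟩
    have hd' : Filter.Tendsto (slope U' a) (nhdsWithin a (Set.Ioi a)) (nhds (q a * U a)) :=
      hd.mono_left (nhdsWithin_mono a hsub)
    have hqU : 0 < q a * U a := mul_pos (hq a ha) hUa
    have h1 : ∀ᶠ x in nhdsWithin a (Set.Ioi a), 0 < slope U' a x :=
      hd'.eventually (eventually_gt_nhds hqU)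
    have h2 : ∀ᶠ x in nhdsWithin a (Set.Ioi a), 0 < U x := by
      have : Filter.Tendsto U (nhdsWithin a (Set.Ioi a)) (nhds (U a)) :=
        (hUcont a ha).mono_left (nhdsWithin_mono a (fun x hx => le_trans ha (le_of_lt hx)))
      exact this.eventually (eventually_gt_nhds hUa)
    have h3 : ∀ᶠ x in nhdsWithin a (Set.Ioi a), a < x := eventually_mem_nhdsWithin
    obtain ⟨b, hb1, hb2, hb3⟩ := (h1.and (h2.and h3)).exists
    have hba : 0 < b - a := sub_pos.2 hb3
    have hU'b : 0 < U' b := by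
      rw [slope_def_field, div_pos_iff] at hb1
      rcases hb1 with ⟨h', _⟩ | ⟨_, h'⟩
      · linarith
      · linarith
    exact krein_key1 q U U' hq hU hU' hlim b (le_trans ha (le_of_lt hb3)) hb2 hU'b

/-- If moreover `U'(0) = 0`, then `U ≤ 0` on `[0,∞)`. -/
lemma krein_key3 (q U U' : ℝ → ℝ) (hq : ∀ x ∈ Set.Ici (0:ℝ), 0 < q x)
    (hU : ∀ x ∈ Set.Ici (0:ℝ), HasDerivWithinAt U (U' x) (Set.Ici 0) x)
    (hU' : ∀ x ∈ Set.Ici (0:ℝ), HasDerivWithinAt U' (q x * U x) (Set.Ici 0) x)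
    (hlim : Filter.Tendsto U Filter.atTop (nhds 0))
    (hU'0 : U' 0 = 0) : ∀ x ∈ Set.Ici (0:ℝ), U x ≤ 0 := by
  intro x hx
  by_contra h
  push_neg at h
  have hUcont : ContinuousOn U (Set.Ici 0) := fun y hy => (hU y hy).continuousWithinAt
  set T := Set.Icc 0 x ∩ U ⁻¹' Set.Iic 0 with hT
  by_cases hne : T.Nonempty
  · have hclosed : IsClosed T :=
      (hUcont.mono Set.Icc_subset_Ici_self).preimage_isClosed_of_isClosed
        isClosed_Icc isClosed_Iic
    have hbdd : BddAbove T := ⟨x, fun y hy => hy.1.2⟩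
    set e := sSup T with he
    have heT : e ∈ T := hclosed.csSup_mem hne hbdd
    have hUe : U e ≤ 0 := heT.2
    have he0 : 0 ≤ e := heT.1.1
    have hex : e < x := lt_of_le_of_ne heT.1.2 (fun heq => by rw [heq] at hUe; linarith)
    obtain ⟨c, hc, hcslope⟩ := exists_hasDerivAt_eq_slope U U' hex
      (hUcont.mono (fun y hy => le_trans he0 hy.1))
      (fun y hy => (hU y (le_of_lt (lt_of_le_of_lt he0 hy.1))).hasDerivAt
        (Ici_mem_nhds (lt_of_le_of_lt he0 hy.1)))
    have hc0 : 0 ≤ c := le_trans he0 (le_of_lt hc.1)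
    have hUc : 0 < U c := by
      by_contra hcon
      push_neg at hcon
      have : c ∈ T := ⟨⟨hc0, le_of_lt hc.2⟩, hcon⟩
      exact absurd (le_csSup hbdd this) (not_le.2 hc.1)
    have hU'c : 0 < U' c := by
      rw [hcslope]
      apply div_pos <;> linarith
    exact krein_key1 q U U' hq hU hU' hlim c hc0 hUc hU'c
  · have hU0 : 0 < U 0 := by
      by_contra hcon
      push_neg at hcon
      exact hne ⟨0, ⟨le_refl 0, hx⟩, hcon⟩
    exact krein_key2 q U U' hq hU hU' hlim 0 le_rfl hU0 (le_of_eq hU'0.symm)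

/-- Uniqueness of the D-solution of Krein's string equation: if `λ > 0`,
`ρ : [0,∞) → (0,∞)` is continuous with `∫_0^∞ ρ = ∞`, and `D₁, D₂` are twice
differentiable on `[0,∞)` with `Dᵢ'' = λ² ρ Dᵢ`, `Dᵢ'(0) = -1` and `Dᵢ(x) → 0`
as `x → ∞`, then `D₁ = D₂` on `[0,∞)`. -/
theorem statement11 (lam : ℝ) (hlam : 0 < lam) (ρ : ℝ → ℝ)
    (hρcont : ContinuousOn ρ (Set.Ici 0))
    (hρpos : ∀ x ∈ Set.Ici (0:ℝ), 0 < ρ x)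
    (hρdiv : ∫⁻ t in Set.Ici (0:ℝ), ENNReal.ofReal (ρ t) = ⊤)
    (D₁ D₁' D₂ D₂' : ℝ → ℝ)
    (hD₁ : ∀ x ∈ Set.Ici (0:ℝ), HasDerivWithinAt D₁ (D₁' x) (Set.Ici 0) x)
    (hD₁' : ∀ x ∈ Set.Ici (0:ℝ),
      HasDerivWithinAt D₁' (lam ^ 2 * ρ x * D₁ x) (Set.Ici 0) x)
    (hD₁0 : D₁' 0 = -1)
    (hD₁lim : Tendsto D₁ atTop (nhds 0))
    (hD₂ : ∀ x ∈ Set.Ici (0:ℝ), HasDerivWithinAt D₂ (D₂' x) (Set.Ici 0) x)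
    (hD₂' : ∀ x ∈ Set.Ici (0:ℝ),
      HasDerivWithinAt D₂' (lam ^ 2 * ρ x * D₂ x) (Set.Ici 0) x)
    (hD₂0 : D₂' 0 = -1)
    (hD₂lim : Tendsto D₂ atTop (nhds 0)) :
    Set.EqOn D₁ D₂ (Set.Ici 0) := by
  intro x hx
  set q : ℝ → ℝ := fun t => lam ^ 2 * ρ t with hqdef
  have hqpos : ∀ t ∈ Set.Ici (0:ℝ), 0 < q t := fun t ht =>
    mul_pos (by positivity) (hρpos t ht)
  -- U = D₁ - D₂
  have hU : ∀ t ∈ Set.Ici (0:ℝ),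
      HasDerivWithinAt (fun s => D₁ s - D₂ s) (D₁' t - D₂' t) (Set.Ici 0) t :=
    fun t ht => (hD₁ t ht).sub (hD₂ t ht)
  have hU' : ∀ t ∈ Set.Ici (0:ℝ),
      HasDerivWithinAt (fun s => D₁' s - D₂' s) (q t * (D₁ t - D₂ t)) (Set.Ici 0) t := by
    intro t ht
    have := (hD₁' t ht).sub (hD₂' t ht)
    exact this.congr_deriv (by simp only [hqdef]; ring)
  have hU'0 : D₁' 0 - D₂' 0 = 0 := by rw [hD₁0, hD₂0]; ring
  have hUlim : Tendsto (fun s => D₁ s - D₂ s) atTop (nhds 0) := by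
    simpa using hD₁lim.sub hD₂lim
  -- V = D₂ - D₁
  have hV : ∀ t ∈ Set.Ici (0:ℝ),
      HasDerivWithinAt (fun s => D₂ s - D₁ s) (D₂' t - D₁' t) (Set.Ici 0) t :=
    fun t ht => (hD₂ t ht).sub (hD₁ t ht)
  have hV' : ∀ t ∈ Set.Ici (0:ℝ),
      HasDerivWithinAt (fun s => D₂' s - D₁' s) (q t * (D₂ t - D₁ t)) (Set.Ici 0) t := by
    intro t ht
    have := (hD₂' t ht).sub (hD₁' t ht)
    exact this.congr_deriv (by simp only [hqdef]; ring)
  have hV'0 : D₂' 0 - D₁' 0 = 0 := by rw [hD₁0, hD₂0]; ring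
  have hVlim : Tendsto (fun s => D₂ s - D₁ s) atTop (nhds 0) := by
    simpa using hD₂lim.sub hD₁lim
  have h1 := krein_key3 q _ _ hqpos hU hU' hUlim hU'0 x hx
  have h2 := krein_key3 q _ _ hqpos hV hV' hVlim hV'0 x hx
  linarith
end

section
/- Let H : (0,∞) → (0,∞) be differentiable and nondecreasing, let λ ∈ ℝ, and let p, q : (0,∞) → ℝ be differentiable functions satisfying the coupled system p′(x) = e^{−λx} q(x) H′(x)/H(x) and q′(x) = e^{λx} p(x) H′(x)/H(x) for all x > 0. Define u(x) := (e^{λx/2} p(x) + e^{−λx/2} q(x))/H(x). Then the function x ↦ H(x)² u′(x) is differentiable on (0,∞) and (H² u′)′(x) = (λ²/4) H(x)² u(x) for all x > 0. (Equivalently: after the change of variable s(x) = ∫ H^{−2} dt, the function A(s(x)) := u(x) satisfies the string equation d²A/(dm ds) = λ² A for the string with dm/ds = H⁴/4.) -/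
open Filter Set

/-- Let `H : (0,∞) → (0,∞)` be differentiable and nondecreasing, `λ ∈ ℝ`, and let
`p, q` be differentiable on `(0,∞)` solving the coupled fluctuation system
`p'(x) = e^{-λx} q(x) H'(x)/H(x)`, `q'(x) = e^{λx} p(x) H'(x)/H(x)`.
With `u(x) := (e^{λx/2} p(x) + e^{-λx/2} q(x))/H(x)`, the function `x ↦ H(x)² u'(x)`
is differentiable on `(0,∞)` and `(H² u')'(x) = (λ²/4) H(x)² u(x)` for all `x > 0`
(the Krein string equation with string density `dm/ds = H⁴/4` after the change of
variable `s = ∫ H⁻²`). -/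
theorem statement13 (lam : ℝ) (H H' p q : ℝ → ℝ)
    (hH : ∀ x ∈ Set.Ioi (0:ℝ), HasDerivAt H (H' x) x)
    (hHmono : MonotoneOn H (Set.Ioi 0))
    (hHpos : ∀ x ∈ Set.Ioi (0:ℝ), 0 < H x)
    (hp : ∀ x ∈ Set.Ioi (0:ℝ),
      HasDerivAt p (Real.exp (-(lam * x)) * q x * H' x / H x) x)
    (hq : ∀ x ∈ Set.Ioi (0:ℝ),
      HasDerivAt q (Real.exp (lam * x) * p x * H' x / H x) x)
    (u : ℝ → ℝ)
    (hu : u = fun x =>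
      (Real.exp (lam * x / 2) * p x + Real.exp (-(lam * x / 2)) * q x) / H x) :
    ∀ x ∈ Set.Ioi (0:ℝ),
      HasDerivAt (fun y : ℝ => (H y) ^ 2 * deriv u y)
        (lam ^ 2 / 4 * (H x) ^ 2 * u x) x := by
  -- derivatives of the exponential factors
  have hE : ∀ y : ℝ, HasDerivAt (fun z => Real.exp (lam * z / 2))
      (lam / 2 * Real.exp (lam * y / 2)) y := by
    intro y
    have h1 : HasDerivAt (fun z : ℝ => lam * z / 2) (lam / 2) y := by
      simpa using ((hasDerivAt_id y).const_mul lam).div_const 2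
    simpa [mul_comm] using h1.exp
  have hE' : ∀ y : ℝ, HasDerivAt (fun z => Real.exp (-(lam * z / 2)))
      (-(lam / 2) * Real.exp (-(lam * y / 2))) y := by
    intro y
    have h1 : HasDerivAt (fun z : ℝ => -(lam * z / 2)) (-(lam / 2)) y := by
      simpa using (((hasDerivAt_id y).const_mul lam).div_const 2).fun_neg
    simpa [mul_comm] using h1.exp
  -- exponential product identities
  have e1 : ∀ y : ℝ, Real.exp (lam * y / 2) * Real.exp (-(lam * y))
      = Real.exp (-(lam * y) / 2) := by
    intro y; rw [← Real.exp_add]; ring_nf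
  have e2 : ∀ y : ℝ, Real.exp (-(lam * y) / 2) * Real.exp (lam * y)
      = Real.exp (lam * y / 2) := by
    intro y; rw [← Real.exp_add]; ring_nf
  -- derivative of u
  have key : ∀ y ∈ Set.Ioi (0:ℝ), HasDerivAt u
      (lam / 2 * (Real.exp (lam * y / 2) * p y - Real.exp (-(lam * y / 2)) * q y) / H y) y := by
    intro y hy
    have hHy := hHpos y hy
    have hN : HasDerivAt
        (fun z => Real.exp (lam * z / 2) * p z + Real.exp (-(lam * z / 2)) * q z)
        ((lam / 2 * Real.exp (lam * y / 2) * p y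
            + Real.exp (lam * y / 2) * (Real.exp (-(lam * y)) * q y * H' y / H y))
          + (-(lam / 2) * Real.exp (-(lam * y / 2)) * q y
            + Real.exp (-(lam * y / 2)) * (Real.exp (lam * y) * p y * H' y / H y))) y :=
      ((hE y).mul (hp y hy)).add ((hE' y).mul (hq y hy))
    have := hN.div (hH y hy) hHy.ne'
    rw [hu]
    refine this.congr_deriv ?_
    symm
    field_simp
    have f1 : Real.exp (lam * y / 2) * Real.exp (-(lam * y)) = Real.exp (-(lam * y / 2)) := by
      rw [← Real.exp_add]; ring_nf
    have f2 : Real.exp (-(lam * y / 2)) * Real.exp (lam * y) = Real.exp (lam * y / 2) := by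
      rw [← Real.exp_add]; ring_nf
    linear_combination (-2 * q y * H' y) * f1 + (-2 * p y * H' y) * f2
  have hx0 : ∀ x ∈ Set.Ioi (0:ℝ), True := fun _ _ => trivial
  intro x hx
  have hHx := hHpos x hx
  -- the function g := (λ/2) H M
  have hg : HasDerivAt
      (fun y => lam / 2 * (H y * (Real.exp (lam * y / 2) * p y
        - Real.exp (-(lam * y / 2)) * q y)))
      (lam ^ 2 / 4 * (H x) ^ 2 * u x) x := by
    have hM : HasDerivAt
        (fun z => Real.exp (lam * z / 2) * p z - Real.exp (-(lam * z / 2)) * q z)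
        ((lam / 2 * Real.exp (lam * x / 2) * p x
            + Real.exp (lam * x / 2) * (Real.exp (-(lam * x)) * q x * H' x / H x))
          - (-(lam / 2) * Real.exp (-(lam * x / 2)) * q x
            + Real.exp (-(lam * x / 2)) * (Real.exp (lam * x) * p x * H' x / H x))) x :=
      ((hE x).mul (hp x hx)).sub ((hE' x).mul (hq x hx))
    have := ((hH x hx).mul hM).const_mul (lam / 2)
    refine this.congr_deriv ?_
    symm
    rw [hu]
    field_simp
    have f1 : Real.exp (lam * x / 2) * Real.exp (-(lam * x)) = Real.exp (-(lam * x / 2)) := by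
      rw [← Real.exp_add]; ring_nf
    have f2 : Real.exp (-(lam * x / 2)) * Real.exp (lam * x) = Real.exp (lam * x / 2) := by
      rw [← Real.exp_add]; ring_nf
    linear_combination (-8 * lam * q x * H' x) * f1 + (8 * lam * p x * H' x) * f2
  refine hg.congr_of_eventuallyEq ?_
  have : Set.Ioi (0:ℝ) ∈ nhds x := isOpen_Ioi.mem_nhds hx
  filter_upwards [this] with y hy
  have hHy := hHpos y hy
  rw [(key y hy).deriv]
  field_simp
end

section
/- Let γ > 0 and λ ∈ ℝ, and define u(x) := e^{λx/2} β̂_{γ,γ+1}(λx) + e^{−λx/2} β̂_{γ,γ+1}(−λx) for x > 0. Then the function x ↦ x^{2γ} u′(x) is differentiable on (0,∞) with (x^{2γ} u′)′(x) = (λ²/4) x^{2γ} u(x) for all x > 0, and u(x) → 2 as x → 0⁺. -/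
open Filter Set

/-- The Beta(a,b) density on `[0,1]`: `β_{a,b}(t) = Γ(a+b)/(Γ(a)Γ(b)) t^(a-1) (1-t)^(b-1)`. -/
noncomputable def betaDens (a b t : ℝ) : ℝ :=
  (Real.Gamma (a + b) / (Real.Gamma a * Real.Gamma b)) * t ^ (a - 1) * (1 - t) ^ (b - 1)

/-- `β̂_{a,b}(λ) = ∫_0^1 e^{-λ t} β_{a,b}(t) dt`. -/
noncomputable def betaHat (a b lam : ℝ) : ℝ :=
  ∫ t in (0:ℝ)..1, Real.exp (-lam * t) * betaDens a b t

section Aux14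

open MeasureTheory intervalIntegral

lemma ae_ne14 (c : ℝ) : ∀ᵐ (t : ℝ), t ≠ c := by
  refine (MeasureTheory.ae_iff).mpr ?_
  simpa using (Real.volume_singleton (x := c))

lemma auxIntW {γ : ℝ} (hγ : 0 < γ) :
    IntervalIntegrable (fun t : ℝ => t ^ (γ-1) * (1-t) ^ (γ-1)) volume 0 1 := by
  have h := (Complex.betaIntegral_convergent (u := (γ:ℂ)) (v := (γ:ℂ))
    (by simpa using hγ) (by simpa using hγ)).norm
  apply h.congr_ae
  rw [Filter.EventuallyEq]
  filter_upwards [MeasureTheory.ae_restrict_mem measurableSet_uIoc,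
    MeasureTheory.ae_restrict_of_ae (ae_ne14 1)] with t ht ht1
  rw [Set.uIoc_of_le (by norm_num : (0:ℝ) ≤ 1)] at ht
  have ht0 : 0 < t := ht.1
  have ht1' : t < 1 := lt_of_le_of_ne ht.2 ht1
  have e1 : ((t:ℂ)) ^ ((γ:ℂ) - 1) = ((t ^ (γ-1) : ℝ) : ℂ) := by
    rw [Complex.ofReal_cpow ht0.le]; push_cast; ring_nf
  have e2 : ((1 - (t:ℂ))) ^ ((γ:ℂ) - 1) = (((1-t) ^ (γ-1) : ℝ) : ℂ) := by
    rw [Complex.ofReal_cpow (by linarith : (0:ℝ) ≤ 1 - t)]; push_cast; ring_nf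
  simp only [e1, e2, ← Complex.ofReal_mul, Complex.norm_real]
  exact abs_of_nonneg (mul_nonneg (Real.rpow_nonneg ht0.le _) (Real.rpow_nonneg (by linarith) _))

lemma auxIntMul {γ : ℝ} (hγ : 0 < γ) {g : ℝ → ℝ} (hg : Continuous g) :
    IntervalIntegrable (fun t : ℝ => g t * (t ^ (γ-1) * (1-t) ^ (γ-1))) volume 0 1 :=
  (auxIntW hγ).continuousOn_mul hg.continuousOn

lemma auxBetaVal {γ : ℝ} (hγ : 0 < γ) :
    (∫ t in (0:ℝ)..1, t ^ (γ-1) * (1-t) ^ (γ-1))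
      = Real.Gamma γ * Real.Gamma γ / Real.Gamma (γ + γ) := by
  have hre : 0 < ((γ:ℂ)).re := by simpa using hγ
  have h := Complex.Gamma_mul_Gamma_eq_betaIntegral hre hre
  have hbeta : Complex.betaIntegral γ γ = ((∫ t in (0:ℝ)..1, t ^ (γ-1) * (1-t) ^ (γ-1) : ℝ) : ℂ) := by
    have key : (∫ t in (0:ℝ)..1, ((t ^ (γ-1) * (1-t) ^ (γ-1) : ℝ) : ℂ))
        = ((∫ t in (0:ℝ)..1, t ^ (γ-1) * (1-t) ^ (γ-1) : ℝ) : ℂ) :=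
      RCLike.intervalIntegral_ofReal
    rw [Complex.betaIntegral, ← key]
    apply intervalIntegral.integral_congr_ae
    filter_upwards [ae_ne14 1, ae_ne14 0] with t ht1 ht0 htm
    rw [Set.uIoc_of_le (by norm_num : (0:ℝ) ≤ 1)] at htm
    have ht0' : 0 < t := lt_of_le_of_ne htm.1.le (Ne.symm ht0)
    have e1 : ((t:ℂ)) ^ ((γ:ℂ) - 1) = ((t ^ (γ-1) : ℝ) : ℂ) := by
      rw [Complex.ofReal_cpow ht0'.le]; push_cast; ring_nf
    have e2 : ((1 - (t:ℂ))) ^ ((γ:ℂ) - 1) = (((1-t) ^ (γ-1) : ℝ) : ℂ) := by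
      rw [Complex.ofReal_cpow (by
        have := lt_of_le_of_ne htm.2 ht1; linarith : (0:ℝ) ≤ 1 - t)]; push_cast; ring_nf
    rw [e1, e2, ← Complex.ofReal_mul]
  rw [hbeta] at h
  have hgam : ((γ:ℂ)) + γ = ((γ + γ : ℝ) : ℂ) := by push_cast; ring
  rw [hgam, Complex.Gamma_ofReal, Complex.Gamma_ofReal, ← Complex.ofReal_mul,
    ← Complex.ofReal_mul] at h
  have := Complex.ofReal_injective h
  have hΓ : Real.Gamma (γ + γ) ≠ 0 := (Real.Gamma_pos_of_pos (by linarith)).ne'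
  rw [eq_div_iff hΓ]
  linear_combination -this

lemma auxDeriv {γ : ℝ} (hγ : 0 < γ) (lam : ℝ) {g : ℝ → ℝ} (hg : Continuous g) (x₀ : ℝ) :
    HasDerivAt (fun x => ∫ t in (0:ℝ)..1, g t * Real.exp (lam * x * (1/2 - t))
        * (t ^ (γ-1) * (1-t) ^ (γ-1)))
      (∫ t in (0:ℝ)..1, (lam * (1/2 - t) * g t) * Real.exp (lam * x₀ * (1/2 - t))
        * (t ^ (γ-1) * (1-t) ^ (γ-1))) x₀ := by
  obtain ⟨M, hM⟩ : ∃ M : ℝ, ∀ t ∈ Set.Icc (0:ℝ) 1, |g t| ≤ M := by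
    obtain ⟨M, hM⟩ := (isCompact_Icc (a := (0:ℝ)) (b := 1)).exists_bound_of_continuousOn
      hg.continuousOn
    exact ⟨M, fun t ht => by simpa using hM t ht⟩
  set K : ℝ := |lam| / 2 * M * Real.exp (|lam| * (|x₀| + 1) / 2) with hK
  have hmw : Measurable (fun t : ℝ => t ^ (γ-1) * (1-t) ^ (γ-1)) :=
    (measurable_id.pow_const _).mul ((measurable_const.sub measurable_id).pow_const _)
  have key := intervalIntegral.hasDerivAt_integral_of_dominated_loc_of_deriv_le
    (𝕜 := ℝ) (μ := volume) (a := 0) (b := 1)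
    (F := fun x t => g t * Real.exp (lam * x * (1/2 - t)) * (t ^ (γ-1) * (1-t) ^ (γ-1)))
    (F' := fun x t => (lam * (1/2 - t) * g t) * Real.exp (lam * x * (1/2 - t))
        * (t ^ (γ-1) * (1-t) ^ (γ-1)))
    (x₀ := x₀) (s := Metric.ball x₀ 1) (bound := fun t => K * (t ^ (γ-1) * (1-t) ^ (γ-1)))
    (Metric.ball_mem_nhds x₀ one_pos)
    (Filter.Eventually.of_forall fun x =>
      (((hg.mul (by continuity)).measurable.mul hmw)).aestronglyMeasurable)
    ((auxIntMul hγ (g := fun t => g t * Real.exp (lam * x₀ * (1/2 - t))) (by continuity)).congr_ae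
      (by filter_upwards with t; ring_nf))
    ((((by continuity : Continuous (fun t : ℝ => (lam * (1/2 - t) * g t)
        * Real.exp (lam * x₀ * (1/2 - t)))).measurable.mul hmw)).aestronglyMeasurable)
    ?_ ?_ ?_
  · have := key.2
    apply this.congr_deriv
    rfl
  · filter_upwards with t ht x hx
    rw [Set.uIoc_of_le (by norm_num : (0:ℝ) ≤ 1)] at ht
    have hw0 : 0 ≤ t ^ (γ-1) * (1-t) ^ (γ-1) :=
      mul_nonneg (Real.rpow_nonneg ht.1.le _) (Real.rpow_nonneg (by linarith [ht.2]) _)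
    have habs : |1/2 - t| ≤ 1/2 := by
      rw [abs_le]; constructor <;> [linarith [ht.2]; linarith [ht.1]]
    have hxb : |x| ≤ |x₀| + 1 := by
      have hd : |x - x₀| ≤ 1 := by
        simpa [Real.norm_eq_abs] using (mem_ball_iff_norm.mp hx).le
      calc |x| = |x₀ + (x - x₀)| := by ring_nf
        _ ≤ |x₀| + |x - x₀| := abs_add_le _ _
        _ ≤ |x₀| + 1 := by linarith
    have hexp : Real.exp (lam * x * (1/2 - t)) ≤ Real.exp (|lam| * (|x₀| + 1) / 2) := by
      apply Real.exp_le_exp.mpr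
      calc lam * x * (1/2 - t) ≤ |lam * x * (1/2 - t)| := le_abs_self _
        _ = |lam| * |x| * |1/2 - t| := by rw [abs_mul, abs_mul]
        _ ≤ |lam| * (|x₀| + 1) * (1/2) := by
            apply mul_le_mul (mul_le_mul le_rfl hxb (abs_nonneg _) (abs_nonneg _)) habs
              (abs_nonneg _) (by positivity)
        _ = |lam| * (|x₀| + 1) / 2 := by ring
    have hM' : 0 ≤ M := le_trans (abs_nonneg _) (hM 0 (by norm_num))
    rw [Real.norm_eq_abs, abs_mul, abs_mul, abs_of_nonneg hw0]
    calc |lam * (1/2 - t) * g t| * |Real.exp (lam * x * (1/2 - t))| * (t ^ (γ-1) * (1-t) ^ (γ-1))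
        ≤ (|lam| / 2 * M) * Real.exp (|lam| * (|x₀| + 1) / 2) * (t ^ (γ-1) * (1-t) ^ (γ-1)) := by
          apply mul_le_mul_of_nonneg_right _ hw0
          refine mul_le_mul ?_ ?_ (abs_nonneg _) (mul_nonneg (by positivity) hM')
          · rw [abs_mul, abs_mul]
            calc |lam| * |1/2 - t| * |g t| ≤ |lam| * (1/2) * M := by
                  apply mul_le_mul (mul_le_mul le_rfl habs (abs_nonneg _) (abs_nonneg _))
                    (hM t ⟨ht.1.le, ht.2⟩) (abs_nonneg _) (by positivity)
              _ = |lam| / 2 * M := by ring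
          · simpa [abs_of_pos (Real.exp_pos (lam * x * (1/2 - t)))] using hexp
      _ = K * (t ^ (γ-1) * (1-t) ^ (γ-1)) := by rw [hK]
  · exact auxIntMul hγ (g := fun _ => K) continuous_const
  · filter_upwards with t ht x hx
    have h1 : HasDerivAt (fun x : ℝ => lam * x * (1/2 - t)) (lam * (1/2 - t)) x := by
      simpa using ((hasDerivAt_id x).const_mul lam).mul_const (1/2 - t)
    have h2 := (h1.exp.const_mul (g t)).mul_const (t ^ (γ-1) * (1-t) ^ (γ-1))
    refine h2.congr_deriv ?_
    ring

lemma auxDeriv1 {γ : ℝ} (hγ : 0 < γ) (lam x₀ : ℝ) :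
    HasDerivAt (fun x => ∫ t in (0:ℝ)..1, Real.exp (lam * x * (1/2 - t))
        * (t ^ (γ-1) * (1-t) ^ (γ-1)))
      (∫ t in (0:ℝ)..1, lam * (1/2 - t) * Real.exp (lam * x₀ * (1/2 - t))
        * (t ^ (γ-1) * (1-t) ^ (γ-1))) x₀ := by
  have h := auxDeriv hγ lam (g := fun _ => (1:ℝ)) continuous_const x₀
  have hfun : (fun x => ∫ t in (0:ℝ)..1, (1:ℝ) * Real.exp (lam * x * (1/2 - t))
      * (t ^ (γ-1) * (1-t) ^ (γ-1)))
      = (fun x => ∫ t in (0:ℝ)..1, Real.exp (lam * x * (1/2 - t))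
      * (t ^ (γ-1) * (1-t) ^ (γ-1))) := by
    funext x
    apply intervalIntegral.integral_congr
    intro t _
    simp only
    ring
  rw [hfun] at h
  convert h using 1
  apply intervalIntegral.integral_congr
  intro t _
  simp only
  ring

lemma auxDeriv2 {γ : ℝ} (hγ : 0 < γ) (lam x₀ : ℝ) :
    HasDerivAt (fun x => ∫ t in (0:ℝ)..1, lam * (1/2 - t) * Real.exp (lam * x * (1/2 - t))
        * (t ^ (γ-1) * (1-t) ^ (γ-1)))
      (∫ t in (0:ℝ)..1, lam * (1/2 - t) * (lam * (1/2 - t)) * Real.exp (lam * x₀ * (1/2 - t))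
        * (t ^ (γ-1) * (1-t) ^ (γ-1))) x₀ :=
  auxDeriv hγ lam (g := fun t => lam * (1/2 - t)) (by fun_prop) x₀

lemma auxParts {γ : ℝ} (hγ : 0 < γ) (lam x : ℝ) :
    (∫ t in (0:ℝ)..1, (lam * x) * (Real.exp (lam * x * (1/2 - t)) * (t ^ γ * (1-t) ^ γ)))
    = ∫ t in (0:ℝ)..1, (2 * γ * (1/2 - t)) * Real.exp (lam * x * (1/2 - t))
        * (t ^ (γ-1) * (1-t) ^ (γ-1)) := by
  have hWcont : Continuous (fun t : ℝ => t ^ γ * (1-t) ^ γ) := by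
    apply Continuous.mul
    · exact Real.continuous_rpow_const hγ.le
    · exact (Real.continuous_rpow_const hγ.le).comp (continuous_const.sub continuous_id)
  have hEcont : Continuous (fun t : ℝ => Real.exp (lam * x * (1/2 - t))) :=
    Real.continuous_exp.comp (by continuity)
  set f : ℝ → ℝ := fun t => Real.exp (lam * x * (1/2 - t)) * (t ^ γ * (1-t) ^ γ) with hf
  set f' : ℝ → ℝ := fun t => -(lam * x) * (Real.exp (lam * x * (1/2 - t)) * (t ^ γ * (1-t) ^ γ))
    + (2 * γ * (1/2 - t)) * Real.exp (lam * x * (1/2 - t)) * (t ^ (γ-1) * (1-t) ^ (γ-1)) with hf'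
  have hI1 : IntervalIntegrable (fun t : ℝ => -(lam * x) *
      (Real.exp (lam * x * (1/2 - t)) * (t ^ γ * (1-t) ^ γ))) volume 0 1 :=
    (continuous_const.mul (hEcont.mul hWcont)).intervalIntegrable 0 1
  have hI2 : IntervalIntegrable (fun t : ℝ => (2 * γ * (1/2 - t)) *
      Real.exp (lam * x * (1/2 - t)) * (t ^ (γ-1) * (1-t) ^ (γ-1))) volume 0 1 := by
    have := auxIntMul hγ (g := fun t => (2 * γ * (1/2 - t)) * Real.exp (lam * x * (1/2 - t)))
      (by fun_prop)
    exact this.congr_ae (by filter_upwards with t; ring)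
  have hIf' : IntervalIntegrable f' volume 0 1 := hI1.add hI2
  have hderiv : ∀ t ∈ Set.Ioo (0:ℝ) 1, HasDerivAt f (f' t) t := by
    intro t ht
    have h1 : HasDerivAt (fun t : ℝ => Real.exp (lam * x * (1/2 - t)))
        (-(lam * x) * Real.exp (lam * x * (1/2 - t))) t := by
      have hb : HasDerivAt (fun t : ℝ => lam * x * (1/2 - t)) (-(lam * x)) t := by
        have hb0 := ((hasDerivAt_id t).const_sub ((1:ℝ)/2)).const_mul (lam * x)
        exact hb0.congr_deriv (by ring)
      simpa [mul_comm] using hb.exp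
    have h2 : HasDerivAt (fun t : ℝ => t ^ γ) (γ * t ^ (γ-1)) t :=
      Real.hasDerivAt_rpow_const (Or.inl ht.1.ne')
    have h3 : HasDerivAt (fun t : ℝ => (1-t) ^ γ) (-(γ * (1-t) ^ (γ-1))) t := by
      have hb : HasDerivAt (fun t : ℝ => 1 - t) (-1) t := by
        simpa using (hasDerivAt_id t).const_sub 1
      have := (Real.hasDerivAt_rpow_const (x := 1 - t) (p := γ)
        (Or.inl (by have := ht.2; intro h; rw [sub_eq_zero] at h; linarith))).comp t hb
      simpa [mul_comm, Function.comp_def] using this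
    have hW : HasDerivAt (fun t : ℝ => t ^ γ * (1-t) ^ γ)
        (γ * t ^ (γ-1) * (1-t) ^ γ + t ^ γ * -(γ * (1-t) ^ (γ-1))) t := h2.mul h3
    have hfull := h1.mul hW
    refine hfull.congr_deriv ?_
    rw [hf']
    have e1 : t ^ γ = t ^ (γ-1) * t := by
      rw [← Real.rpow_add_one ht.1.ne' (γ-1)]; ring_nf
    have e2 : (1-t) ^ γ = (1-t) ^ (γ-1) * (1-t) := by
      rw [← Real.rpow_add_one (by intro h; rw [sub_eq_zero] at h; exact absurd h.symm ht.2.ne) (γ-1)]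
      ring_nf
    simp only [e1, e2]
    ring
  have hcont : ContinuousOn f (Set.Icc 0 1) := (hEcont.mul hWcont).continuousOn
  have hzero : (∫ t in (0:ℝ)..1, f' t) = f 1 - f 0 := by
    apply intervalIntegral.integral_eq_sub_of_hasDeriv_right_of_le (by norm_num) hcont
      (fun t ht => (hderiv t ht).hasDerivWithinAt) hIf'
  have hf10 : f 1 - f 0 = 0 := by
    rw [hf]; simp [Real.zero_rpow hγ.ne']
  rw [hf10] at hzero
  rw [intervalIntegral.integral_add hI1 hI2] at hzero
  have hpull : (∫ t in (0:ℝ)..1, -(lam * x) * (Real.exp (lam * x * (1/2 - t)) * (t ^ γ * (1-t) ^ γ)))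
      = -(lam * x) * ∫ t in (0:ℝ)..1, Real.exp (lam * x * (1/2 - t)) * (t ^ γ * (1-t) ^ γ) :=
    intervalIntegral.integral_const_mul _ _
  have hpull2 : (∫ t in (0:ℝ)..1, (lam * x) * (Real.exp (lam * x * (1/2 - t)) * (t ^ γ * (1-t) ^ γ)))
      = (lam * x) * ∫ t in (0:ℝ)..1, Real.exp (lam * x * (1/2 - t)) * (t ^ γ * (1-t) ^ γ) :=
    intervalIntegral.integral_const_mul _ _
  rw [hpull] at hzero
  rw [hpull2]
  linarith

lemma auxRepr {γ : ℝ} (hγ : 0 < γ) (lam x : ℝ) :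
    Real.exp (lam * x / 2) * betaHat γ (γ + 1) (lam * x)
      + Real.exp (-(lam * x / 2)) * betaHat γ (γ + 1) (-(lam * x))
    = (Real.Gamma (γ + (γ + 1)) / (Real.Gamma γ * Real.Gamma (γ + 1)))
      * ∫ t in (0:ℝ)..1, Real.exp (lam * x * (1/2 - t)) * (t ^ (γ-1) * (1-t) ^ (γ-1)) := by
  set C : ℝ := Real.Gamma (γ + (γ + 1)) / (Real.Gamma γ * Real.Gamma (γ + 1)) with hC
  have hβint : ∀ g : ℝ → ℝ, Continuous g → IntervalIntegrable
      (fun t : ℝ => g t * betaDens γ (γ+1) t) volume 0 1 := by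
    intro g hg
    have := auxIntMul hγ (g := fun t => g t * (C * (1-t))) (by fun_prop)
    apply this.congr_ae
    filter_upwards [MeasureTheory.ae_restrict_of_ae (ae_ne14 1),
      MeasureTheory.ae_restrict_mem measurableSet_uIoc] with t ht1 htm
    rw [Set.uIoc_of_le (by norm_num : (0:ℝ) ≤ 1)] at htm
    have h1t : 1 - t ≠ 0 := by intro h; rw [sub_eq_zero] at h; exact ht1 h.symm
    have e2 : (1-t) ^ (γ+1-1) = (1-t) ^ (γ-1) * (1-t) := by
      rw [← Real.rpow_add_one h1t (γ-1)]; ring_nf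
    simp only [betaDens, hC, e2]
    ring
  have hβint' : ∀ g : ℝ → ℝ, Continuous g → IntervalIntegrable
      (fun t : ℝ => g t * betaDens γ (γ+1) (1-t)) volume 0 1 := by
    intro g hg
    have := auxIntMul hγ (g := fun t => g t * (C * t)) (by fun_prop)
    apply this.congr_ae
    filter_upwards [MeasureTheory.ae_restrict_mem measurableSet_uIoc] with t htm
    rw [Set.uIoc_of_le (by norm_num : (0:ℝ) ≤ 1)] at htm
    have e2 : t ^ (γ+1-1) = t ^ (γ-1) * t := by
      rw [← Real.rpow_add_one htm.1.ne' (γ-1)]; ring_nf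
    simp only [betaDens, hC, e2, sub_sub_cancel]
    ring
  have hT1 : Real.exp (lam * x / 2) * betaHat γ (γ + 1) (lam * x)
      = ∫ t in (0:ℝ)..1, Real.exp (lam * x * (1/2 - t)) * betaDens γ (γ+1) t := by
    rw [betaHat, ← intervalIntegral.integral_const_mul]
    apply intervalIntegral.integral_congr
    intro t _
    simp only
    rw [← mul_assoc, ← Real.exp_add]
    congr 2
    ring
  have hT2 : Real.exp (-(lam * x / 2)) * betaHat γ (γ + 1) (-(lam * x))
      = ∫ t in (0:ℝ)..1, Real.exp (lam * x * (t - 1/2)) * betaDens γ (γ+1) t := by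
    rw [betaHat, ← intervalIntegral.integral_const_mul]
    apply intervalIntegral.integral_congr
    intro t _
    simp only
    rw [← mul_assoc, ← Real.exp_add]
    congr 2
    ring
  have hsub : (∫ t in (0:ℝ)..1, Real.exp (lam * x * (t - 1/2)) * betaDens γ (γ+1) t)
      = ∫ t in (0:ℝ)..1, Real.exp (lam * x * (1/2 - t)) * betaDens γ (γ+1) (1-t) := by
    have := intervalIntegral.integral_comp_sub_left
      (fun t => Real.exp (lam * x * (t - 1/2)) * betaDens γ (γ+1) t) 1 (a := 0) (b := 1)
    norm_num at this
    rw [← this]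
    apply intervalIntegral.integral_congr
    intro t _
    simp only
    congr 2
    ring
  have hEc : Continuous (fun t : ℝ => Real.exp (lam * x * (1/2 - t))) :=
    Real.continuous_exp.comp (by fun_prop)
  rw [hT1, hT2, hsub, ← intervalIntegral.integral_add
    (hβint (fun t => Real.exp (lam * x * (1/2 - t))) hEc)
    (hβint' (fun t => Real.exp (lam * x * (1/2 - t))) hEc),
    ← intervalIntegral.integral_const_mul]
  apply intervalIntegral.integral_congr_ae
  filter_upwards [ae_ne14 1, ae_ne14 0] with t ht1 ht0 htm
  rw [Set.uIoc_of_le (by norm_num : (0:ℝ) ≤ 1)] at htm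
  have h1t : 1 - t ≠ 0 := by intro h; rw [sub_eq_zero] at h; exact ht1 h.symm
  have e1 : t ^ (γ+1-1) = t ^ (γ-1) * t := by
    rw [← Real.rpow_add_one ht0 (γ-1)]; ring_nf
  have e2 : (1-t) ^ (γ+1-1) = (1-t) ^ (γ-1) * (1-t) := by
    rw [← Real.rpow_add_one h1t (γ-1)]; ring_nf
  simp only [betaDens, hC, e1, e2, sub_sub_cancel]
  ring

end Aux14
/-- For `γ > 0`, `λ ∈ ℝ` and `u(x) = e^{λx/2} β̂_{γ,γ+1}(λx) + e^{-λx/2} β̂_{γ,γ+1}(-λx)`,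
the function `x ↦ x^{2γ} u'(x)` is differentiable on `(0,∞)` with
`(x^{2γ} u')'(x) = (λ²/4) x^{2γ} u(x)`, and `u(x) → 2` as `x → 0⁺`. -/
theorem statement14 (γ : ℝ) (hγ : 0 < γ) (lam : ℝ)
    (u : ℝ → ℝ)
    (hu : u = fun x => Real.exp (lam * x / 2) * betaHat γ (γ + 1) (lam * x)
      + Real.exp (-(lam * x / 2)) * betaHat γ (γ + 1) (-(lam * x))) :
    (∀ x ∈ Set.Ioi (0:ℝ),
      HasDerivAt (fun y : ℝ => y ^ (2 * γ) * deriv u y)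
        (lam ^ 2 / 4 * x ^ (2 * γ) * u x) x) ∧
    Tendsto u (nhdsWithin 0 (Set.Ioi 0)) (nhds 2) := by
  set C : ℝ := Real.Gamma (γ + (γ + 1)) / (Real.Gamma γ * Real.Gamma (γ + 1)) with hC
  have hfun : u = fun x => C * ∫ t in (0:ℝ)..1, Real.exp (lam * x * (1/2 - t))
      * (t ^ (γ-1) * (1-t) ^ (γ-1)) := by
    rw [hu]; funext x; exact auxRepr hγ lam x
  have hud : ∀ y : ℝ, HasDerivAt u
      (C * ∫ t in (0:ℝ)..1, lam * (1/2 - t) * Real.exp (lam * y * (1/2 - t))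
        * (t ^ (γ-1) * (1-t) ^ (γ-1))) y := by
    intro y
    rw [hfun]
    exact (auxDeriv1 hγ lam y).const_mul C
  have hu' : deriv u = fun y => C * ∫ t in (0:ℝ)..1, lam * (1/2 - t)
      * Real.exp (lam * y * (1/2 - t)) * (t ^ (γ-1) * (1-t) ^ (γ-1)) :=
    funext fun y => (hud y).deriv
  constructor
  · intro x hx
    have hx0 : 0 < x := hx
    simp only [hu']; simp only [hfun]
    set P : ℝ := ∫ t in (0:ℝ)..1, Real.exp (lam * x * (1/2 - t))
      * (t ^ (γ-1) * (1-t) ^ (γ-1)) with hP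
    set P1 : ℝ := ∫ t in (0:ℝ)..1, lam * (1/2 - t) * Real.exp (lam * x * (1/2 - t))
      * (t ^ (γ-1) * (1-t) ^ (γ-1)) with hP1
    set P2 : ℝ := ∫ t in (0:ℝ)..1, lam * (1/2 - t) * (lam * (1/2 - t))
      * Real.exp (lam * x * (1/2 - t)) * (t ^ (γ-1) * (1-t) ^ (γ-1)) with hP2
    set J : ℝ := ∫ t in (0:ℝ)..1, Real.exp (lam * x * (1/2 - t)) * (t ^ γ * (1-t) ^ γ)
      with hJ
    have hpow : HasDerivAt (fun y : ℝ => y ^ (2*γ)) (2*γ * x ^ (2*γ-1)) x :=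
      Real.hasDerivAt_rpow_const (Or.inl hx0.ne')
    have hQ : HasDerivAt (fun y : ℝ => C * ∫ t in (0:ℝ)..1, lam * (1/2 - t)
        * Real.exp (lam * y * (1/2 - t)) * (t ^ (γ-1) * (1-t) ^ (γ-1))) (C * P2) x :=
      (auxDeriv2 hγ lam x).const_mul C
    have total := hpow.mul hQ
    refine total.congr_deriv (Eq.symm ?_)
    rw [← hP1]
    -- scalar identity
    have hparts := auxParts hγ lam x
    have hpull : (∫ t in (0:ℝ)..1, (lam * x) * (Real.exp (lam * x * (1/2 - t))
        * (t ^ γ * (1-t) ^ γ))) = (lam * x) * J :=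
      intervalIntegral.integral_const_mul _ _
    rw [hpull] at hparts
    -- hparts : lam * x * J = ∫ (2γ(1/2-t)) e w
    have h1 : 2*γ * P1 = lam * (lam * x * J) := by
      rw [hparts, hP1, ← intervalIntegral.integral_const_mul, ← intervalIntegral.integral_const_mul]
      apply intervalIntegral.integral_congr
      intro t _
      simp only
      ring
    have h2 : P2 = lam^2/4 * P - lam^2 * J := by
      have hsplit : P2 = (∫ t in (0:ℝ)..1, lam^2/4 * (Real.exp (lam * x * (1/2 - t))
            * (t ^ (γ-1) * (1-t) ^ (γ-1))))
          - ∫ t in (0:ℝ)..1, lam^2 * (Real.exp (lam * x * (1/2 - t)) * (t ^ γ * (1-t) ^ γ)) := by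
        rw [hP2, ← intervalIntegral.integral_sub]
        · apply intervalIntegral.integral_congr_ae
          filter_upwards [ae_ne14 1, ae_ne14 0] with t ht1 ht0 htm
          rw [Set.uIoc_of_le (by norm_num : (0:ℝ) ≤ 1)] at htm
          have h1t : 1 - t ≠ 0 := by intro h; rw [sub_eq_zero] at h; exact ht1 h.symm
          have e1 : t ^ γ = t ^ (γ-1) * t := by
            rw [← Real.rpow_add_one ht0 (γ-1)]; ring_nf
          have e2 : (1-t) ^ γ = (1-t) ^ (γ-1) * (1-t) := by
            rw [← Real.rpow_add_one h1t (γ-1)]; ring_nf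
          simp only [e1, e2]
          ring
        · have := auxIntMul hγ (g := fun t => lam^2/4 * Real.exp (lam * x * (1/2 - t)))
            (by fun_prop)
          exact this.congr_ae (by filter_upwards with t; ring)
        · have hWcont : Continuous (fun t : ℝ => t ^ γ * (1-t) ^ γ) :=
            (Real.continuous_rpow_const hγ.le).mul
              ((Real.continuous_rpow_const hγ.le).comp (continuous_const.sub continuous_id))
          exact (continuous_const.mul ((Real.continuous_exp.comp (by fun_prop)).mul
            hWcont)).intervalIntegrable 0 1
      rw [hsplit, intervalIntegral.integral_const_mul, intervalIntegral.integral_const_mul,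
        ← hP, ← hJ]
    have h3 : x ^ (2*γ) = x ^ (2*γ-1) * x := by
      rw [← Real.rpow_add_one hx0.ne' (2*γ-1)]; ring_nf
    linear_combination (-(C * x ^ (2*γ-1))) * h1 + (-(x ^ (2*γ) * C)) * h2 + (C * lam^2 * J) * h3
  · -- limit
    have hcont : ContinuousAt u 0 := (hud 0).continuousAt
    have hval : u 0 = 2 := by
      rw [hfun]
      simp only
      have hP0 : (∫ t in (0:ℝ)..1, Real.exp (lam * 0 * (1/2 - t))
          * (t ^ (γ-1) * (1-t) ^ (γ-1)))
          = ∫ t in (0:ℝ)..1, t ^ (γ-1) * (1-t) ^ (γ-1) := by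
        apply intervalIntegral.integral_congr
        intro t _
        simp only
        norm_num
      rw [hP0, auxBetaVal hγ, hC]
      have hadd : γ + (γ + 1) = (γ + γ) + 1 := by ring
      rw [hadd, Real.Gamma_add_one (by positivity : γ + γ ≠ 0),
        Real.Gamma_add_one hγ.ne']
      have hΓ1 : Real.Gamma γ ≠ 0 := (Real.Gamma_pos_of_pos hγ).ne'
      have hΓ2 : Real.Gamma (γ + γ) ≠ 0 := (Real.Gamma_pos_of_pos (by linarith)).ne'
      field_simp
      ring
    rw [← hval]
    exact (hcont.tendsto).mono_left nhdsWithin_le_nhds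
end
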